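/- Let p be a permutation of length n written as p = LnR, where n is the maximum entry and L and R are both nonempty. Then s(p) = s(L)s(R)n avoids both 132 and 312 if and only if all of the following hold: s(L) avoids 132 and 312; s(R) avoids 132 and 312; every left-to-right maximum of s(R) other than the first entry of s(R) is greater than every entry of L; every left-to-right minimum of s(R) other than the first entry of s(R) is less than every entry of L; and the first entry of s(R) is either greater than every entry of L or less than every entry of L. -/

import Mathlib

/-- The stack-sorting map `s`, implemented with a fuel parameter (the fuel
`l.length` always suffices, since the maximum of a nonempty list of naturals is
attained, so both recursive calls are on strictly shorter lists).
`s(ε) = ε` and `s(LmR) = s(L) s(R) m` where `m` is the maximum entry. -/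
def stackSortAux : ℕ → List ℕ → List ℕ
  | 0, _ => []
  | _ + 1, [] => []
  | fuel + 1, a :: t =>
      let m := (a :: t).foldr max 0
      stackSortAux fuel ((a :: t).takeWhile (fun x => x ≠ m)) ++
        stackSortAux fuel (((a :: t).dropWhile (fun x => x ≠ m)).tail) ++ [m]

/-- The stack-sorting map on finite sequences of (distinct) naturals. -/
def stackSort (l : List ℕ) : List ℕ := stackSortAux l.length l

/-- `l` is a permutation of `{1, 2, …, n}`, written in one-line notation. -/
def IsPermList (n : ℕ) (l : List ℕ) : Prop :=
  l.Perm ((List.range n).map (· + 1))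

/-- The sequence `p` contains the pattern `q`: there is a strictly increasing choice
of positions of `p` on which the entries compare exactly as the entries of `q` do. -/
def ContainsPat (p q : List ℕ) : Prop :=
  ∃ f : Fin q.length → Fin p.length, StrictMono f ∧
    ∀ i j : Fin q.length, q.get i < q.get j ↔ p.get (f i) < p.get (f j)

/-- The sequence `p` avoids the pattern `q`. -/
def AvoidsPat (p q : List ℕ) : Prop := ¬ ContainsPat p q

/-- The entry in position `i` of `l` is a left-to-right maximum: it is larger than
every entry to its left. -/
def IsLTRMax (l : List ℕ) (i : Fin l.length) : Prop :=
  ∀ j : Fin l.length, j < i → l.get j < l.get i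

/-- The entry in position `i` of `l` is a left-to-right minimum: it is smaller than
every entry to its left. -/
def IsLTRMin (l : List ℕ) (i : Fin l.length) : Prop :=
  ∀ j : Fin l.length, j < i → l.get i < l.get j

lemma le_foldr_max {x : ℕ} {l : List ℕ} (h : x ∈ l) : x ≤ l.foldr max 0 := by
  induction l with
  | nil => simp at h
  | cons a t ih =>
    rcases List.mem_cons.1 h with rfl | h
    · exact le_max_left _ _
    · exact le_trans (ih h) (le_max_right _ _)

lemma foldr_max_mem {l : List ℕ} (h : l ≠ []) : l.foldr max 0 ∈ l := by
  induction l with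
  | nil => simp at h
  | cons a t ih =>
    rcases eq_or_ne t [] with rfl | ht
    · simp
    · simp only [List.foldr_cons]
      rcases le_total a (t.foldr max 0) with h1 | h1
      · rw [max_eq_right h1]; exact List.mem_cons_of_mem _ (ih ht)
      · rw [max_eq_left h1]; exact List.mem_cons_self

lemma dropWhile_ne_nil {l : List ℕ} {m : ℕ} (hm : m ∈ l) :
    l.dropWhile (fun x => x ≠ m) ≠ [] := by
  intro h
  have h2 := List.takeWhile_append_dropWhile (p := fun x => x ≠ m) (l := l)
  rw [h, List.append_nil] at h2
  have := List.mem_takeWhile_imp (l := l) (p := fun x => x ≠ m) (by rw [h2]; exact hm)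
  simp at this

lemma takeWhile_lt {l : List ℕ} {m : ℕ} (hm : m ∈ l) :
    (l.takeWhile (fun x => x ≠ m)).length < l.length := by
  have h1 := (List.takeWhile_sublist (l := l) (fun x => x ≠ m)).length_le
  have h2 := List.takeWhile_append_dropWhile (p := fun x => x ≠ m) (l := l)
  have h3 := dropWhile_ne_nil hm
  have h4 : 0 < (l.dropWhile (fun x => x ≠ m)).length := List.length_pos_iff.2 h3
  have h5 : (l.takeWhile (fun x => x ≠ m)).length
      + (l.dropWhile (fun x => x ≠ m)).length = l.length := by
    rw [← List.length_append, h2]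
  omega

lemma dropWhile_tail_lt {l : List ℕ} {m : ℕ} (hm : m ∈ l) :
    ((l.dropWhile (fun x => x ≠ m)).tail).length < l.length := by
  have h1 := (List.dropWhile_sublist (l := l) (fun x => x ≠ m)).length_le
  have h3 := dropWhile_ne_nil hm
  have h4 : 0 < (l.dropWhile (fun x => x ≠ m)).length := List.length_pos_iff.2 h3
  have := List.length_tail (l := l.dropWhile (fun x => x ≠ m))
  omega

lemma head_dropWhile {l : List ℕ} {m : ℕ} (hm : m ∈ l) :
    l.dropWhile (fun x => x ≠ m) = m :: (l.dropWhile (fun x => x ≠ m)).tail := by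
  have h2 := dropWhile_ne_nil hm
  have h3 : (l.dropWhile (fun x => x ≠ m)).head h2 = m := by
    have := List.head_dropWhile_not (p := fun x => decide (x ≠ m)) h2
    simpa using this
  conv_lhs => rw [← List.cons_head_tail h2, h3]

lemma stackSortAux_congr : ∀ N : ℕ, ∀ l : List ℕ, ∀ f1 f2 : ℕ, l.length ≤ N →
    l.length ≤ f1 → l.length ≤ f2 → stackSortAux f1 l = stackSortAux f2 l := by
  intro N
  induction N with
  | zero =>
    intro l f1 f2 h _ _
    have : l = [] := List.length_eq_zero_iff.1 (Nat.le_zero.1 h)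
    subst this
    cases f1 <;> cases f2 <;> rfl
  | succ N ih =>
    intro l f1 f2 hN h1 h2
    match l, f1, f2 with
    | [], f1, f2 => cases f1 <;> cases f2 <;> rfl
    | a :: t, g1 + 1, g2 + 1 =>
      simp only [stackSortAux]
      have hm : (a :: t).foldr max 0 ∈ a :: t := foldr_max_mem (by simp)
      have ht := takeWhile_lt hm
      have hd := dropWhile_tail_lt hm
      rw [ih _ g1 g2 (by simp at h1 hN ht ⊢; omega) (by simp at h1 ht ⊢; omega)
            (by simp at h2 ht ⊢; omega),
          ih _ g1 g2 (by simp at h1 hN hd ⊢; omega) (by simp at h1 hd ⊢; omega)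
            (by simp at h2 hd ⊢; omega)]

lemma stackSortAux_eq {l : List ℕ} {f : ℕ} (h : l.length ≤ f) :
    stackSortAux f l = stackSort l :=
  stackSortAux_congr l.length l f l.length le_rfl h le_rfl

lemma stackSort_cons (a : ℕ) (t : List ℕ) :
    stackSort (a :: t) =
      stackSort ((a :: t).takeWhile (fun x => x ≠ (a :: t).foldr max 0)) ++
        stackSort (((a :: t).dropWhile (fun x => x ≠ (a :: t).foldr max 0)).tail) ++
        [(a :: t).foldr max 0] := by
  have hm : (a :: t).foldr max 0 ∈ a :: t := foldr_max_mem (by simp)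
  have ht := takeWhile_lt hm
  have hd := dropWhile_tail_lt hm
  have hc : (a :: t).length = t.length + 1 := rfl
  show stackSortAux (t.length + 1) (a :: t) = _
  simp only [stackSortAux]
  rw [stackSortAux_eq (by omega), stackSortAux_eq (by omega)]

lemma stackSort_perm_aux : ∀ N : ℕ, ∀ l : List ℕ, l.length ≤ N → (stackSort l).Perm l := by
  intro N
  induction N with
  | zero =>
    intro l h
    have : l = [] := List.length_eq_zero_iff.1 (Nat.le_zero.1 h)
    subst this; rfl
  | succ N ih =>
    intro l h
    match l with
    | [] => rfl
    | a :: t =>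
      have hm : (a :: t).foldr max 0 ∈ a :: t := foldr_max_mem (by simp)
      have ht := takeWhile_lt hm
      have hd := dropWhile_tail_lt hm
      have hc : (a :: t).length = t.length + 1 := rfl
      rw [stackSort_cons]
      have p1 := ih ((a :: t).takeWhile (fun x => x ≠ (a :: t).foldr max 0)) (by omega)
      have p2 := ih (((a :: t).dropWhile (fun x => x ≠ (a :: t).foldr max 0)).tail) (by omega)
      have key := List.takeWhile_append_dropWhile (p := fun x => x ≠ (a :: t).foldr max 0)
        (l := a :: t)
      rw [head_dropWhile hm] at key
      have step1 := (p1.append p2).append (List.Perm.refl [(a :: t).foldr max 0])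
      refine step1.trans ?_
      have step2 : ((a :: t).takeWhile (fun x => x ≠ (a :: t).foldr max 0) ++
          ((a :: t).dropWhile (fun x => x ≠ (a :: t).foldr max 0)).tail ++
          [(a :: t).foldr max 0]).Perm
          ((a :: t).takeWhile (fun x => x ≠ (a :: t).foldr max 0) ++
          ((a :: t).foldr max 0 ::
            ((a :: t).dropWhile (fun x => x ≠ (a :: t).foldr max 0)).tail)) := by
        rw [List.append_assoc]
        exact (List.Perm.refl _).append (List.perm_append_singleton _ _)
      refine step2.trans ?_
      rw [key]

lemma stackSort_perm (l : List ℕ) : (stackSort l).Perm l :=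
  stackSort_perm_aux l.length l le_rfl

def Occ132 (p : List ℕ) : Prop :=
  ∃ a b c : ℕ, a < b ∧ b < c ∧ c < p.length ∧
    p.getD a 0 < p.getD c 0 ∧ p.getD c 0 < p.getD b 0

def Occ312 (p : List ℕ) : Prop :=
  ∃ a b c : ℕ, a < b ∧ b < c ∧ c < p.length ∧
    p.getD b 0 < p.getD c 0 ∧ p.getD c 0 < p.getD a 0

lemma getD_eq_get (p : List ℕ) (i : Fin p.length) : p.getD i.val 0 = p.get i := by
  rw [List.getD_eq_getElem _ _ i.isLt, List.get_eq_getElem]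

lemma contains132_iff (p : List ℕ) : ContainsPat p [1, 3, 2] ↔ Occ132 p := by
  constructor
  · rintro ⟨f, hmono, hspec⟩
    refine ⟨(f ⟨0, by norm_num⟩).val, (f ⟨1, by norm_num⟩).val, (f ⟨2, by norm_num⟩).val,
      hmono (by decide : (⟨0, by norm_num⟩ : Fin 3) < ⟨1, by norm_num⟩),
      hmono (by decide : (⟨1, by norm_num⟩ : Fin 3) < ⟨2, by norm_num⟩),
      (f ⟨2, by norm_num⟩).isLt, ?_, ?_⟩
    · rw [getD_eq_get, getD_eq_get]
      exact (hspec ⟨0, by norm_num⟩ ⟨2, by norm_num⟩).1 (by norm_num)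
    · rw [getD_eq_get, getD_eq_get]
      exact (hspec ⟨2, by norm_num⟩ ⟨1, by norm_num⟩).1 (by norm_num)
  · rintro ⟨a, b, c, hab, hbc, hc, h1, h2⟩
    have ha : a < p.length := by omega
    have hb : b < p.length := by omega
    refine ⟨fun i => if i.val = 0 then ⟨a, ha⟩ else if i.val = 1 then ⟨b, hb⟩ else ⟨c, hc⟩,
      ?_, ?_⟩
    · intro i j hij
      fin_cases i <;> fin_cases j <;> simp_all <;> omega
    · simp only [List.getD_eq_getElem _ _ ha, List.getD_eq_getElem _ _ hb,
        List.getD_eq_getElem _ _ hc] at h1 h2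
      intro i j
      fin_cases i <;> fin_cases j <;>
        simp [List.get_eq_getElem] <;> omega

lemma contains312_iff (p : List ℕ) : ContainsPat p [3, 1, 2] ↔ Occ312 p := by
  constructor
  · rintro ⟨f, hmono, hspec⟩
    refine ⟨(f ⟨0, by norm_num⟩).val, (f ⟨1, by norm_num⟩).val, (f ⟨2, by norm_num⟩).val,
      hmono (by decide : (⟨0, by norm_num⟩ : Fin 3) < ⟨1, by norm_num⟩),
      hmono (by decide : (⟨1, by norm_num⟩ : Fin 3) < ⟨2, by norm_num⟩),
      (f ⟨2, by norm_num⟩).isLt, ?_, ?_⟩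
    · rw [getD_eq_get, getD_eq_get]
      exact (hspec ⟨1, by norm_num⟩ ⟨2, by norm_num⟩).1 (by norm_num)
    · rw [getD_eq_get, getD_eq_get]
      exact (hspec ⟨2, by norm_num⟩ ⟨0, by norm_num⟩).1 (by norm_num)
  · rintro ⟨a, b, c, hab, hbc, hc, h1, h2⟩
    have ha : a < p.length := by omega
    have hb : b < p.length := by omega
    refine ⟨fun i => if i.val = 0 then ⟨a, ha⟩ else if i.val = 1 then ⟨b, hb⟩ else ⟨c, hc⟩,
      ?_, ?_⟩
    · intro i j hij
      fin_cases i <;> fin_cases j <;> simp_all <;> omega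
    · simp only [List.getD_eq_getElem _ _ ha, List.getD_eq_getElem _ _ hb,
        List.getD_eq_getElem _ _ hc] at h1 h2
      intro i j
      fin_cases i <;> fin_cases j <;>
        simp [List.get_eq_getElem] <;> omega

lemma avoids132_iff (p : List ℕ) : AvoidsPat p [1, 3, 2] ↔ ¬ Occ132 p := by
  rw [AvoidsPat, contains132_iff]

lemma avoids312_iff (p : List ℕ) : AvoidsPat p [3, 1, 2] ↔ ¬ Occ312 p := by
  rw [AvoidsPat, contains312_iff]

lemma gA {A B : List ℕ} {i : ℕ} (h : i < A.length) :
    (A ++ B).getD i 0 = A.getD i 0 := List.getD_append _ _ _ _ h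

lemma gB {A B : List ℕ} {i : ℕ} (h : A.length ≤ i) :
    (A ++ B).getD i 0 = B.getD (i - A.length) 0 := List.getD_append_right _ _ _ _ h

lemma getD_mem {l : List ℕ} {i : ℕ} (h : i < l.length) : l.getD i 0 ∈ l := by
  rw [List.getD_eq_getElem _ _ h]; exact List.getElem_mem h

lemma mem_index {l : List ℕ} {x : ℕ} (h : x ∈ l) : ∃ i, i < l.length ∧ l.getD i 0 = x := by
  obtain ⟨i, hi, he⟩ := List.mem_iff_getElem.1 h
  exact ⟨i, hi, by rw [List.getD_eq_getElem _ _ hi, he]⟩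

lemma nodup_getD_ne {l : List ℕ} (h : l.Nodup) {i j : ℕ} (hij : i ≠ j)
    (hi : i < l.length) (hj : j < l.length) : l.getD i 0 ≠ l.getD j 0 := by
  rw [List.getD_eq_getElem _ _ hi, List.getD_eq_getElem _ _ hj]
  intro he
  exact hij ((h.getElem_inj_iff).1 he)

lemma prefix_argmax (B : List ℕ) : ∀ i, i < B.length →
    ∃ j, j ≤ i ∧ (∀ k, k < j → B.getD k 0 < B.getD j 0) ∧
      (∀ k, k ≤ i → B.getD k 0 ≤ B.getD j 0) := by
  intro i
  induction i with
  | zero => intro _; exact ⟨0, le_rfl, fun k hk => by omega, fun k hk => by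
      have : k = 0 := by omega
      simp [this]⟩
  | succ i ih =>
    intro hi
    obtain ⟨j, hj, hltr, hbound⟩ := ih (by omega)
    rcases le_or_gt (B.getD (i+1) 0) (B.getD j 0) with h | h
    · exact ⟨j, by omega, hltr, fun k hk => by
        rcases Nat.lt_succ_iff_lt_or_eq.1 (Nat.lt_succ_of_le hk) with h' | h'
        · exact hbound k (by omega)
        · rw [h']; exact h⟩
    · refine ⟨i+1, le_rfl, fun k hk => lt_of_le_of_lt (hbound k (by omega)) h,
        fun k hk => ?_⟩
      rcases Nat.lt_or_ge k (i+1) with h' | h'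
      · exact le_of_lt (lt_of_le_of_lt (hbound k (by omega)) h)
      · have : k = i + 1 := by omega
        rw [this]

lemma prefix_argmin (B : List ℕ) : ∀ i, i < B.length →
    ∃ j, j ≤ i ∧ (∀ k, k < j → B.getD j 0 < B.getD k 0) ∧
      (∀ k, k ≤ i → B.getD j 0 ≤ B.getD k 0) := by
  intro i
  induction i with
  | zero => intro _; exact ⟨0, le_rfl, fun k hk => by omega, fun k hk => by
      have : k = 0 := by omega
      simp [this]⟩
  | succ i ih =>
    intro hi
    obtain ⟨j, hj, hltr, hbound⟩ := ih (by omega)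
    rcases le_or_gt (B.getD j 0) (B.getD (i+1) 0) with h | h
    · exact ⟨j, by omega, hltr, fun k hk => by
        rcases Nat.lt_succ_iff_lt_or_eq.1 (Nat.lt_succ_of_le hk) with h' | h'
        · exact hbound k (by omega)
        · rw [h']; exact h⟩
    · refine ⟨i+1, le_rfl, fun k hk => lt_of_lt_of_le h (hbound k (by omega)),
        fun k hk => ?_⟩
      rcases Nat.lt_or_ge k (i+1) with h' | h'
      · exact le_of_lt (lt_of_lt_of_le h (hbound k (by omega)))
      · have : k = i + 1 := by omega
        rw [this]

lemma core (A B : List ℕ) (hB : B ≠ []) (hnd : (A ++ B).Nodup) :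
    (¬ Occ132 (A ++ B) ∧ ¬ Occ312 (A ++ B)) ↔
      (¬ Occ132 A ∧ ¬ Occ312 A ∧ ¬ Occ132 B ∧ ¬ Occ312 B ∧
       (∀ i, 0 < i → i < B.length → (∀ k, k < i → B.getD k 0 < B.getD i 0) →
          ∀ x ∈ A, x < B.getD i 0) ∧
       (∀ i, 0 < i → i < B.length → (∀ k, k < i → B.getD i 0 < B.getD k 0) →
          ∀ x ∈ A, B.getD i 0 < x) ∧
       ((∀ x ∈ A, x < B.getD 0 0) ∨ (∀ x ∈ A, B.getD 0 0 < x))) := by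
  have hBnd : B.Nodup := (List.nodup_append.1 hnd).2.1
  have hdisj : ∀ x ∈ A, ∀ y ∈ B, x ≠ y := fun x hx y hy =>
    fun h => (List.disjoint_of_nodup_append hnd) hx (h ▸ hy)
  have hBlen : 0 < B.length := List.length_pos_iff.2 hB
  have hlen : (A ++ B).length = A.length + B.length := List.length_append
  constructor
  · rintro ⟨h132, h312⟩
    refine ⟨?_, ?_, ?_, ?_, ?_, ?_, ?_⟩
    · rintro ⟨a, b, c, hab, hbc, hc, h1, h2⟩
      exact h132 ⟨a, b, c, hab, hbc, by omega,
        by rwa [gA (by omega), gA (by omega)], by rwa [gA (by omega), gA (by omega)]⟩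
    · rintro ⟨a, b, c, hab, hbc, hc, h1, h2⟩
      exact h312 ⟨a, b, c, hab, hbc, by omega,
        by rwa [gA (by omega), gA (by omega)], by rwa [gA (by omega), gA (by omega)]⟩
    · rintro ⟨a, b, c, hab, hbc, hc, h1, h2⟩
      refine h132 ⟨A.length + a, A.length + b, A.length + c, by omega, by omega, by omega,
        ?_, ?_⟩
      · rw [gB (by omega), gB (by omega)]; simpa using h1
      · rw [gB (by omega), gB (by omega)]; simpa using h2
    · rintro ⟨a, b, c, hab, hbc, hc, h1, h2⟩
      refine h312 ⟨A.length + a, A.length + b, A.length + c, by omega, by omega, by omega,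
        ?_, ?_⟩
      · rw [gB (by omega), gB (by omega)]; simpa using h1
      · rw [gB (by omega), gB (by omega)]; simpa using h2
    · intro i hi0 hi hltr x hx
      obtain ⟨ia, hia, hiav⟩ := mem_index hx
      by_contra hcon
      have hne : x ≠ B.getD i 0 := hdisj x hx _ (getD_mem hi)
      have hgt : B.getD i 0 < x := by omega
      refine h312 ⟨ia, A.length, A.length + i, by omega, by omega, by omega, ?_, ?_⟩
      · rw [gB (le_refl _), gB (by omega)]
        simpa using hltr 0 hi0
      · rw [gB (by omega), gA hia, hiav]
        simpa using hgt
    · intro i hi0 hi hltr x hx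
      obtain ⟨ia, hia, hiav⟩ := mem_index hx
      by_contra hcon
      have hne : x ≠ B.getD i 0 := hdisj x hx _ (getD_mem hi)
      have hlt : x < B.getD i 0 := by omega
      refine h132 ⟨ia, A.length, A.length + i, by omega, by omega, by omega, ?_, ?_⟩
      · rw [gA hia, hiav, gB (by omega)]
        simpa using hlt
      · rw [gB (le_refl _), gB (by omega)]
        simpa using hltr 0 hi0
    · by_contra hcon
      push_neg at hcon
      obtain ⟨⟨x, hx, hx2⟩, ⟨y, hy, hy2⟩⟩ := hcon
      have hxne : x ≠ B.getD 0 0 := hdisj x hx _ (getD_mem hBlen)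
      have hyne : y ≠ B.getD 0 0 := hdisj y hy _ (getD_mem hBlen)
      have hxgt : B.getD 0 0 < x := by omega
      have hylt : y < B.getD 0 0 := by omega
      obtain ⟨ix, hix, hixv⟩ := mem_index hx
      obtain ⟨iy, hiy, hiyv⟩ := mem_index hy
      have hne : ix ≠ iy := by
        intro h; rw [h, hiyv] at hixv; omega
      rcases Nat.lt_or_ge ix iy with h | h
      · refine h312 ⟨ix, iy, A.length, h, by omega, by omega, ?_, ?_⟩
        · rw [gB (le_refl _), gA hiy, hiyv]; simpa using hylt
        · rw [gB (le_refl _), gA hix, hixv]; simpa using hxgt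
      · refine h132 ⟨iy, ix, A.length, by omega, by omega, by omega, ?_, ?_⟩
        · rw [gB (le_refl _), gA hiy, hiyv]; simpa using hylt
        · rw [gB (le_refl _), gA hix, hixv]; simpa using hxgt
  · rintro ⟨hA132, hA312, hB132, hB312, hmax, hmin, hhead⟩
    -- straddle: no element of B lies strictly between two elements of A
    have straddle : ∀ i, i < B.length → ∀ x y, x ∈ A → y ∈ A →
        x < B.getD i 0 → B.getD i 0 < y → False := by
      intro i hi x y hx hy hxz hzy
      obtain ⟨j, hji, hjltr, hjbd⟩ := prefix_argmax B i hi
      obtain ⟨k, hki, hkltr, hkbd⟩ := prefix_argmin B i hi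
      by_cases hj0 : j = 0
      · by_cases hk0 : k = 0
        · -- B0 = B i, so i = 0, and B0 between x and y contradicts hhead
          have h1 := hjbd i le_rfl
          have h2 := hkbd i le_rfl
          rw [hj0] at h1; rw [hk0] at h2
          have hzB0 : B.getD i 0 = B.getD 0 0 := by omega
          rcases hhead with hh | hh
          · have := hh y hy; omega
          · have := hh x hx; omega
        · -- k ≠ 0: B0 is prefix max; z < B0; (0, k, i) is a 312 in B
          have hB0 : B.getD i 0 ≤ B.getD 0 0 := by
            have := hjbd i le_rfl; rwa [hj0] at this
          have hkx : B.getD k 0 < x := hmin k (by omega) (by omega) hkltr x hx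
          have hki' : k ≠ i := by
            intro h; rw [h] at hkx; omega
          have hi0 : i ≠ 0 := by omega
          have hz0 : B.getD i 0 < B.getD 0 0 :=
            lt_of_le_of_ne hB0 (nodup_getD_ne hBnd hi0 hi hBlen)
          exact hB312 ⟨0, k, i, by omega, by omega, hi, by omega, hz0⟩
      · have hjy : y < B.getD j 0 := hmax j (by omega) (by omega) hjltr y hy
        have hjne : j ≠ i := by
          intro h; rw [h] at hjy; omega
        by_cases hk0 : k = 0
        · -- (0, j, i) is a 132 in B
          have hB0 : B.getD 0 0 ≤ B.getD i 0 := by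
            have := hkbd i le_rfl; rwa [hk0] at this
          have hi0 : i ≠ 0 := by
            intro h; rw [h] at hji; omega
          have hz0 : B.getD 0 0 < B.getD i 0 :=
            lt_of_le_of_ne hB0 (nodup_getD_ne hBnd (Ne.symm hi0) hBlen hi)
          exact hB132 ⟨0, j, i, by omega, by omega, hi, hz0, by omega⟩
        · have hkx : B.getD k 0 < x := hmin k (by omega) (by omega) hkltr x hx
          have hkne : k ≠ i := by
            intro h; rw [h] at hkx; omega
          have hjk : j ≠ k := by
            intro h; rw [h] at hjy; omega
          rcases Nat.lt_or_ge j k with h | h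
          · exact hB312 ⟨j, k, i, h, by omega, hi, by omega, by omega⟩
          · exact hB132 ⟨k, j, i, by omega, by omega, hi, by omega, by omega⟩
    -- bstraddle: 132 with first leg in A is impossible
    have bstraddle : ∀ i2 i3, i2 < i3 → i3 < B.length → ∀ x ∈ A,
        x < B.getD i3 0 → B.getD i3 0 < B.getD i2 0 → False := by
      intro i2 i3 h23 hi3 x hx hx3 h32
      obtain ⟨j, hji, hjltr, hjbd⟩ := prefix_argmax B i2 (by omega)
      obtain ⟨k, hki, hkltr, hkbd⟩ := prefix_argmin B i3 hi3
      have hjbig : B.getD i2 0 ≤ B.getD j 0 := hjbd i2 le_rfl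
      have hksm : B.getD k 0 ≤ B.getD i3 0 := hkbd i3 le_rfl
      have hkne3 : k ≠ i3 → B.getD k 0 < B.getD i3 0 := fun h =>
        lt_of_le_of_ne hksm (nodup_getD_ne hBnd h (by omega) hi3)
      by_cases hj0 : j = 0
      · -- B0 ≥ x2 > x3; k ≠ 0; (0,k,i3) is 312 in B
        have hB0 : B.getD i2 0 ≤ B.getD 0 0 := by rwa [hj0] at hjbig
        have hk0 : k ≠ 0 := by
          intro h
          rw [h] at hksm; omega
        have hkx : B.getD k 0 < x := hmin k (by omega) (by omega) hkltr x hx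
        have hkne : k ≠ i3 := by
          intro h; rw [h] at hkx; omega
        exact hB312 ⟨0, k, i3, by omega, by omega, hi3, by omega, by omega⟩
      · have hjbig2 : ∀ a ∈ A, a < B.getD j 0 := hmax j (by omega) (by omega) hjltr
        have hxj : x < B.getD j 0 := hjbig2 x hx
        have hjne3 : j ≠ i3 := by omega
        by_cases hk0 : k = 0
        · -- (0, j, i3) is 132 in B
          have hB0 : B.getD 0 0 ≤ B.getD i3 0 := by rwa [hk0] at hksm
          have hi30 : i3 ≠ 0 := by omega
          have h0lt : B.getD 0 0 < B.getD i3 0 :=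
            lt_of_le_of_ne hB0 (nodup_getD_ne hBnd (Ne.symm hi30) hBlen hi3)
          exact hB132 ⟨0, j, i3, by omega, by omega, hi3, h0lt, by omega⟩
        · have hkx : B.getD k 0 < x := hmin k (by omega) (by omega) hkltr x hx
          have hkne : k ≠ i3 := by
            intro h; rw [h] at hkx; omega
          have hklt : B.getD k 0 < B.getD i3 0 := hkne3 hkne
          have hjk : j ≠ k := by
            intro h; rw [← h] at hkx; omega
          rcases Nat.lt_or_ge j k with h | h
          · exact hB312 ⟨j, k, i3, h, by omega, hi3, by omega, by omega⟩
          · exact hB132 ⟨k, j, i3, by omega, by omega, hi3, by omega, by omega⟩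
    -- bstraddle': 312 with first leg in A is impossible
    have bstraddle' : ∀ i2 i3, i2 < i3 → i3 < B.length → ∀ x ∈ A,
        B.getD i2 0 < B.getD i3 0 → B.getD i3 0 < x → False := by
      intro i2 i3 h23 hi3 x hx h23v h3x
      obtain ⟨k, hki, hkltr, hkbd⟩ := prefix_argmin B i2 (by omega)
      obtain ⟨j, hji, hjltr, hjbd⟩ := prefix_argmax B i3 hi3
      have hksm : B.getD k 0 ≤ B.getD i2 0 := hkbd i2 le_rfl
      have hjbig : B.getD i3 0 ≤ B.getD j 0 := hjbd i3 le_rfl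
      by_cases hk0 : k = 0
      · have hB0 : B.getD 0 0 ≤ B.getD i2 0 := by rwa [hk0] at hksm
        have hj0 : j ≠ 0 := by
          intro h
          rw [h] at hjbig; omega
        have hjx : x < B.getD j 0 := hmax j (by omega) (by omega) hjltr x hx
        have hjne : j ≠ i3 := by
          intro h; rw [h] at hjx; omega
        exact hB132 ⟨0, j, i3, by omega, by omega, hi3,
          by omega, lt_of_le_of_ne hjbig (nodup_getD_ne hBnd hjne (by omega) hi3).symm⟩
      · have hkx : B.getD k 0 < x := hmin k (by omega) (by omega) hkltr x hx
        by_cases hj0 : j = 0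
        · have hB0 : B.getD i3 0 ≤ B.getD 0 0 := by rwa [hj0] at hjbig
          have hi30 : i3 ≠ 0 := by omega
          have hlt : B.getD i3 0 < B.getD 0 0 :=
            lt_of_le_of_ne hB0 (nodup_getD_ne hBnd hi30 hi3 hBlen)
          have hkne : k ≠ i3 := by omega
          exact hB312 ⟨0, k, i3, by omega, by omega, hi3, by omega, hlt⟩
        · have hjx : x < B.getD j 0 := hmax j (by omega) (by omega) hjltr x hx
          have hjne : j ≠ i3 := by
            intro h; rw [h] at hjx; omega
          have hkne : k ≠ i3 := by omega
          have hjk : j ≠ k := by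
            intro h; rw [h] at hjx; omega
          rcases Nat.lt_or_ge j k with h | h
          · exact hB312 ⟨j, k, i3, h, by omega, hi3, by omega, by omega⟩
          · exact hB132 ⟨k, j, i3, by omega, by omega, hi3, by omega, by omega⟩
    constructor
    · rintro ⟨a, b, c, hab, hbc, hc, h1, h2⟩
      rcases Nat.lt_or_ge c A.length with hcA | hcA
      · exact hA132 ⟨a, b, c, hab, hbc, hcA, by rwa [gA (by omega), gA hcA] at h1,
          by rwa [gA hcA, gA (by omega)] at h2⟩
      rcases Nat.lt_or_ge a A.length with haA | haA
      · rcases Nat.lt_or_ge b A.length with hbA | hbA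
        · rw [gA haA, gB hcA] at h1
          rw [gB hcA, gA hbA] at h2
          exact straddle (c - A.length) (by omega) _ _ (getD_mem haA) (getD_mem hbA) h1 h2
        · rw [gA haA, gB hcA] at h1
          rw [gB hcA, gB hbA] at h2
          exact bstraddle (b - A.length) (c - A.length) (by omega) (by omega) _
            (getD_mem haA) h1 h2
      · rw [gB (by omega), gB hcA] at h1
        rw [gB hcA, gB (by omega)] at h2
        exact hB132 ⟨a - A.length, b - A.length, c - A.length, by omega, by omega,
          by omega, h1, h2⟩
    · rintro ⟨a, b, c, hab, hbc, hc, h1, h2⟩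
      rcases Nat.lt_or_ge c A.length with hcA | hcA
      · exact hA312 ⟨a, b, c, hab, hbc, hcA, by rwa [gA (by omega), gA hcA] at h1,
          by rwa [gA hcA, gA (by omega)] at h2⟩
      rcases Nat.lt_or_ge a A.length with haA | haA
      · rcases Nat.lt_or_ge b A.length with hbA | hbA
        · rw [gB hcA, gA haA] at h2
          rw [gA hbA, gB hcA] at h1
          exact straddle (c - A.length) (by omega) _ _ (getD_mem hbA) (getD_mem haA) h1 h2
        · rw [gB hbA, gB hcA] at h1
          rw [gB hcA, gA haA] at h2
          exact bstraddle' (b - A.length) (c - A.length) (by omega) (by omega) _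
            (getD_mem haA) h1 h2
      · rw [gB (by omega), gB hcA] at h1
        rw [gB hcA, gB (by omega)] at h2
        exact hB312 ⟨a - A.length, b - A.length, c - A.length, by omega, by omega,
          by omega, h1, h2⟩

lemma gA' {A B : List ℕ} {i : ℕ} (h : i < A.length) :
    (A ++ B).getD i 0 = A.getD i 0 := List.getD_append _ _ _ _ h

lemma gB' {A B : List ℕ} {i : ℕ} (h : A.length ≤ i) :
    (A ++ B).getD i 0 = B.getD (i - A.length) 0 := List.getD_append_right _ _ _ _ h

lemma getD_mem' {l : List ℕ} {i : ℕ} (h : i < l.length) : l.getD i 0 ∈ l := by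
  rw [List.getD_eq_getElem _ _ h]; exact List.getElem_mem h

lemma occ132_append_max {X : List ℕ} {n : ℕ} (h : ∀ x ∈ X, x < n) :
    Occ132 (X ++ [n]) ↔ Occ132 X := by
  have hlen : (X ++ [n]).length = X.length + 1 := by simp
  constructor
  · rintro ⟨a, b, c, hab, hbc, hc, h1, h2⟩
    have hcX : c < X.length := by
      by_contra hcon
      have hcX : c = X.length := by omega
      rw [hcX, gB' (le_refl _), gA' (show b < X.length by omega)] at h2
      have hn : [n].getD (X.length - X.length) 0 = n := by simp
      rw [hn] at h2
      have := h _ (getD_mem' (show b < X.length by omega))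
      omega
    exact ⟨a, b, c, hab, hbc, hcX, by rwa [gA' (by omega), gA' hcX] at h1,
      by rwa [gA' hcX, gA' (by omega)] at h2⟩
  · rintro ⟨a, b, c, hab, hbc, hc, h1, h2⟩
    exact ⟨a, b, c, hab, hbc, by omega, by rwa [gA' (by omega), gA' (by omega)],
      by rwa [gA' (by omega), gA' (by omega)]⟩

lemma occ312_append_max {X : List ℕ} {n : ℕ} (h : ∀ x ∈ X, x < n) :
    Occ312 (X ++ [n]) ↔ Occ312 X := by
  have hlen : (X ++ [n]).length = X.length + 1 := by simp
  constructor
  · rintro ⟨a, b, c, hab, hbc, hc, h1, h2⟩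
    have hcX : c < X.length := by
      by_contra hcon
      have hcX : c = X.length := by omega
      rw [hcX, gB' (le_refl _), gA' (show a < X.length by omega)] at h2
      have hn : [n].getD (X.length - X.length) 0 = n := by simp
      rw [hn] at h2
      have := h _ (getD_mem' (show a < X.length by omega))
      omega
    exact ⟨a, b, c, hab, hbc, hcX, by rwa [gA' (by omega), gA' hcX] at h1,
      by rwa [gA' hcX, gA' (by omega)] at h2⟩
  · rintro ⟨a, b, c, hab, hbc, hc, h1, h2⟩
    exact ⟨a, b, c, hab, hbc, by omega, by rwa [gA' (by omega), gA' (by omega)],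
      by rwa [gA' (by omega), gA' (by omega)]⟩

lemma takeWhile_all_append {p : ℕ → Bool} {L : List ℕ} (R : List ℕ)
    (h : ∀ x ∈ L, p x = true) : (L ++ R).takeWhile p = L ++ R.takeWhile p := by
  induction L with
  | nil => simp
  | cons a t ih =>
    have h1 := h a List.mem_cons_self
    have h2 := ih (fun x hx => h x (List.mem_cons_of_mem _ hx))
    simp [List.takeWhile_cons, h1, h2]

lemma dropWhile_all_append {p : ℕ → Bool} {L : List ℕ} (R : List ℕ)
    (h : ∀ x ∈ L, p x = true) : (L ++ R).dropWhile p = R.dropWhile p := by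
  induction L with
  | nil => simp
  | cons a t ih =>
    have h1 := h a List.mem_cons_self
    have h2 := ih (fun x hx => h x (List.mem_cons_of_mem _ hx))
    simp [List.dropWhile_cons, h1, h2]

lemma foldr_max_le {l : List ℕ} {n : ℕ} (h : ∀ x ∈ l, x ≤ n) : l.foldr max 0 ≤ n := by
  induction l with
  | nil => simp
  | cons a t ih =>
    simp only [List.foldr_cons, max_le_iff]
    exact ⟨h a List.mem_cons_self, ih (fun x hx => h x (List.mem_cons_of_mem _ hx))⟩

lemma headI_eq_getD {l : List ℕ} (h : l ≠ []) : l.headI = l.getD 0 0 := by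
  cases l with
  | nil => exact absurd rfl h
  | cons a t => rfl

lemma stackSort_unfold (l : List ℕ) (h : l ≠ []) :
    stackSort l = stackSort (l.takeWhile (fun x => x ≠ l.foldr max 0)) ++
      stackSort ((l.dropWhile (fun x => x ≠ l.foldr max 0)).tail) ++ [l.foldr max 0] := by
  cases l with
  | nil => exact absurd rfl h
  | cons a t => exact stackSort_cons a t

lemma stackSort_split (n : ℕ) (L R : List ℕ)
    (hmax : (L ++ n :: R).foldr max 0 = n) (hLne : ∀ x ∈ L, x ≠ n) :
    stackSort (L ++ n :: R) = stackSort L ++ stackSort R ++ [n] := by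
  rw [stackSort_unfold (L ++ n :: R) (by simp), hmax]
  have hpL : ∀ x ∈ L, (fun x => decide (x ≠ n)) x = true := by
    intro x hx
    simp [hLne x hx]
  rw [takeWhile_all_append (n :: R) hpL, dropWhile_all_append (n :: R) hpL]
  have h1 : (n :: R).takeWhile (fun x => x ≠ n) = [] := by
    simp [List.takeWhile_cons]
  have h2 : (n :: R).dropWhile (fun x => x ≠ n) = n :: R := by
    simp [List.dropWhile_cons]
  rw [h1, h2, List.append_nil]
  rfl

/-- let `p = L n R` be a permutation of length `n` (so `n` is its
maximum entry) with `L, R` nonempty. Then `s(p) = s(L) s(R) n`, and `s(p)` avoids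
both `132` and `312` if and only if: `s(L)` avoids `132` and `312`; `s(R)` avoids
`132` and `312`; every left-to-right maximum of `s(R)` other than its first entry is
greater than every entry of `L`; every left-to-right minimum of `s(R)` other than its
first entry is less than every entry of `L`; and the first entry of `s(R)` is either
greater than every entry of `L` or less than every entry of `L`. -/
theorem av132_312_split (n : ℕ) (L R : List ℕ) (hL : L ≠ []) (hR : R ≠ [])
    (hp : IsPermList n (L ++ n :: R)) :
    stackSort (L ++ n :: R) = stackSort L ++ stackSort R ++ [n] ∧
    ((AvoidsPat (stackSort (L ++ n :: R)) [1, 3, 2] ∧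
        AvoidsPat (stackSort (L ++ n :: R)) [3, 1, 2]) ↔
      (AvoidsPat (stackSort L) [1, 3, 2] ∧ AvoidsPat (stackSort L) [3, 1, 2] ∧
       AvoidsPat (stackSort R) [1, 3, 2] ∧ AvoidsPat (stackSort R) [3, 1, 2] ∧
       (∀ i : Fin (stackSort R).length, i.val ≠ 0 → IsLTRMax (stackSort R) i →
          ∀ x ∈ L, x < (stackSort R).get i) ∧
       (∀ i : Fin (stackSort R).length, i.val ≠ 0 → IsLTRMin (stackSort R) i →
          ∀ x ∈ L, (stackSort R).get i < x) ∧
       ((∀ x ∈ L, x < (stackSort R).headI) ∨ (∀ x ∈ L, (stackSort R).headI < x)))) := by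
  have hp' : (L ++ n :: R).Perm ((List.range n).map (· + 1)) := hp
  have hnd : (L ++ n :: R).Nodup := by
    refine hp'.nodup_iff.2 (List.Nodup.map ?_ List.nodup_range)
    intro a b h
    have h2 : a + 1 = b + 1 := h
    omega
  have hle : ∀ x ∈ L ++ n :: R, x ≤ n := by
    intro x hx
    have hx2 := hp'.mem_iff.1 hx
    simp only [List.mem_map, List.mem_range] at hx2
    obtain ⟨y, hy, rfl⟩ := hx2
    omega
  have hLne : ∀ x ∈ L, x ≠ n := by
    intro x hx heq
    exact (List.disjoint_of_nodup_append hnd) hx (heq ▸ List.mem_cons_self)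
  have hnR : n ∉ R := (List.nodup_cons.1 (List.nodup_append.1 hnd).2.1).1
  have hmax : (L ++ n :: R).foldr max 0 = n :=
    le_antisymm (foldr_max_le hle) (le_foldr_max (by simp))
  have hsplit := stackSort_split n L R hmax hLne
  refine ⟨hsplit, ?_⟩
  have hAperm := stackSort_perm L
  have hBperm := stackSort_perm R
  have hLR : (L ++ R).Nodup :=
    hnd.sublist ((List.Sublist.refl L).append (List.sublist_cons_self n R))
  have hABnd : (stackSort L ++ stackSort R).Nodup :=
    ((hAperm.append hBperm).nodup_iff).2 hLR
  have hABlt : ∀ x ∈ stackSort L ++ stackSort R, x < n := by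
    intro x hx
    have hx' : x ∈ L ++ R := (hAperm.append hBperm).mem_iff.1 hx
    have hxle : x ≤ n := by
      refine hle x ?_
      rcases List.mem_append.1 hx' with h | h
      · exact List.mem_append.2 (Or.inl h)
      · exact List.mem_append.2 (Or.inr (List.mem_cons_of_mem _ h))
    have hxne : x ≠ n := by
      rcases List.mem_append.1 hx' with h | h
      · exact hLne x h
      · intro he
        exact hnR (he ▸ h)
    omega
  have hBne : stackSort R ≠ [] := by
    intro h
    rw [h] at hBperm
    exact hR (hBperm.symm.eq_nil)
  rw [hsplit, avoids132_iff, avoids312_iff, avoids132_iff, avoids312_iff,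
    avoids132_iff, avoids312_iff, occ132_append_max hABlt, occ312_append_max hABlt,
    core _ _ hBne hABnd]
  have hmemA : ∀ x, x ∈ stackSort L ↔ x ∈ L := fun x => hAperm.mem_iff
  constructor
  · rintro ⟨h1, h2, h3, h4, h5, h6, h7⟩
    refine ⟨h1, h2, h3, h4, ?_, ?_, ?_⟩
    · intro i hi0 hltr x hx
      rw [← getD_eq_get]
      refine h5 i.val (Nat.pos_of_ne_zero hi0) i.isLt ?_ x ((hmemA x).2 hx)
      intro k hk
      have hik : k < (stackSort R).length := lt_trans hk i.isLt
      have hkk : (⟨k, hik⟩ : Fin (stackSort R).length) < i := hk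
      have h' := hltr ⟨k, hik⟩ hkk
      rwa [← getD_eq_get _ ⟨k, hik⟩, ← getD_eq_get _ i] at h'
    · intro i hi0 hltr x hx
      rw [← getD_eq_get]
      refine h6 i.val (Nat.pos_of_ne_zero hi0) i.isLt ?_ x ((hmemA x).2 hx)
      intro k hk
      have hik : k < (stackSort R).length := lt_trans hk i.isLt
      have hkk : (⟨k, hik⟩ : Fin (stackSort R).length) < i := hk
      have h' := hltr ⟨k, hik⟩ hkk
      rwa [← getD_eq_get _ ⟨k, hik⟩, ← getD_eq_get _ i] at h'
    · rw [headI_eq_getD hBne]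
      rcases h7 with h | h
      · exact Or.inl (fun x hx => h x ((hmemA x).2 hx))
      · exact Or.inr (fun x hx => h x ((hmemA x).2 hx))
  · rintro ⟨h1, h2, h3, h4, h5, h6, h7⟩
    refine ⟨h1, h2, h3, h4, ?_, ?_, ?_⟩
    · intro i hi0 hi hltr x hx
      have key := h5 ⟨i, hi⟩ (Nat.pos_iff_ne_zero.1 hi0) ?_ x ((hmemA x).1 hx)
      · rwa [← getD_eq_get _ ⟨i, hi⟩] at key
      · intro j hj
        rw [← getD_eq_get _ j, ← getD_eq_get _ ⟨i, hi⟩]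
        exact hltr j.val hj
    · intro i hi0 hi hltr x hx
      have key := h6 ⟨i, hi⟩ (Nat.pos_iff_ne_zero.1 hi0) ?_ x ((hmemA x).1 hx)
      · rwa [← getD_eq_get _ ⟨i, hi⟩] at key
      · intro j hj
        rw [← getD_eq_get _ j, ← getD_eq_get _ ⟨i, hi⟩]
        exact hltr j.val hj
    · rw [headI_eq_getD hBne] at h7
      rcases h7 with h | h
      · exact Or.inl (fun x hx => h x ((hmemA x).1 hx))
      · exact Or.inr (fun x hx => h x ((hmemA x).1 hx))
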